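/- Let (M, 𝒜, μ) be a finite measure space, X = L²(μ) the real Hilbert space with inner product ⟪f,g⟫ = ∫ f·g dμ, and J : X → ℝ absolutely one-homogeneous and translation invariant. Suppose C ⊆ M is measurable with μ(C) > 0 and μ(M \ C) > 0, and C is an eigenset of J with eigenvalue λ and ratio β = μ(C)/μ(M \ C). Then for every measurable set D with C ⊆ D ⊆ M and μ(M \ D) > 0, one has J(χ_C) ≤ (μ(M \ C)/μ(M \ D)) · J(χ_D). (This is the paper's main Theorem: every eigenset of a closed surface's total variation is a locally minimal perimeter set.) -/

import Mathlib

open MeasureTheory RealInnerProductSpace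

/-- `p` is a subgradient of `J` at `u`. -/
def IsSubgradientAt {X : Type*} [NormedAddCommGroup X] [InnerProductSpace ℝ X]
    (J : X → ℝ) (p u : X) : Prop :=
  ∀ v : X, J v ≥ J u + ⟪p, v - u⟫

/-- The indicator function of a measurable set as an element of `L²(μ)`. -/
noncomputable def chi {M : Type*} [MeasurableSpace M] (μ : Measure M) [IsFiniteMeasure μ]
    {C : Set M} (hC : MeasurableSet C) : Lp ℝ 2 μ :=
  indicatorConstLp 2 hC (measure_ne_top μ C) (1 : ℝ)

/-- `C` is an eigenset of `J` with eigenvalue `lam` and ratio `β > 0`: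
`ψ := χ_C − β • χ_{M \ C}` satisfies that `lam • ψ` is a subgradient of `J` at `ψ`. -/
def IsEigenset {M : Type*} [MeasurableSpace M] (μ : Measure M) [IsFiniteMeasure μ]
    (J : Lp ℝ 2 μ → ℝ) {C : Set M} (hC : MeasurableSet C) (lam β : ℝ) : Prop :=
  0 < β ∧ IsSubgradientAt J
    (lam • (chi μ hC - β • chi μ hC.compl)) (chi μ hC - β • chi μ hC.compl)

lemma chi_congr {M : Type*} [MeasurableSpace M] (μ : Measure M) [IsFiniteMeasure μ]
    {A B : Set M} (hA : MeasurableSet A) (hB : MeasurableSet B) (h : A = B) :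
    chi μ hA = chi μ hB := by subst h; rfl

lemma inner_chi_chi {M : Type*} [MeasurableSpace M] (μ : Measure M) [IsFiniteMeasure μ]
    {A B : Set M} (hA : MeasurableSet A) (hB : MeasurableSet B) :
    ⟪chi μ hA, chi μ hB⟫ = (μ (A ∩ B)).toReal := by
  rw [chi, chi, L2.inner_indicatorConstLp_one,
    setIntegral_indicatorConstLp hA hB (measure_ne_top μ B) (1 : ℝ)]
  rw [Set.inter_comm]; simp; rfl

lemma chi_add_chi_compl {M : Type*} [MeasurableSpace M] (μ : Measure M) [IsFiniteMeasure μ]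
    {C : Set M} (hC : MeasurableSet C) :
    chi μ hC + chi μ hC.compl
      = chi μ (MeasurableSet.univ : MeasurableSet (Set.univ : Set M)) := by
  rw [chi, chi,
    ← indicatorConstLp_disjoint_union hC hC.compl (measure_ne_top μ C) (measure_ne_top μ Cᶜ)
      disjoint_compl_right (1 : ℝ)]
  exact chi_congr μ (hC.union hC.compl) MeasurableSet.univ (Set.union_compl_self C)

set_option maxHeartbeats 1000000 in
/-- Every eigenset of a translation-invariant, absolutely one-homogeneous functional on
a finite measure space is a locally minimal perimeter set:
`J(χ_C) ≤ (μ(M \ C)/μ(M \ D)) · J(χ_D)` for every measurable `D ⊇ C`. -/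
theorem eigenset_is_locally_minimal_perimeter_set
    {M : Type*} [MeasurableSpace M] (μ : Measure M) [IsFiniteMeasure μ]
    (J : Lp ℝ 2 μ → ℝ)
    (hhom : ∀ (α : ℝ) (u : Lp ℝ 2 μ), J (α • u) = |α| * J u)
    (htrans : ∀ (u : Lp ℝ 2 μ) (c : ℝ),
      J (u + c • chi μ (MeasurableSet.univ : MeasurableSet (Set.univ : Set M))) = J u)
    {C : Set M} (hC : MeasurableSet C) (hCpos : 0 < μ C) (hCcpos : 0 < μ Cᶜ)
    (lam : ℝ)
    (heig : IsEigenset μ J hC lam ((μ C).toReal / (μ Cᶜ).toReal)) :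
    ∀ (D : Set M) (hD : MeasurableSet D), C ⊆ D → 0 < μ Dᶜ →
      J (chi μ hC) ≤ ((μ Cᶜ).toReal / (μ Dᶜ).toReal) * J (chi μ hD) := by
  intro D hD hCD hDc
  set a : ℝ := (μ C).toReal with ha_def
  set b : ℝ := (μ Cᶜ).toReal with hb_def
  set d : ℝ := (μ Dᶜ).toReal with hd_def
  have ha : 0 < a := ENNReal.toReal_pos hCpos.ne' (measure_ne_top μ C)
  have hb : 0 < b := ENNReal.toReal_pos hCcpos.ne' (measure_ne_top μ Cᶜ)
  have hd : 0 < d := ENNReal.toReal_pos hDc.ne' (measure_ne_top μ Dᶜ)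
  set β : ℝ := a / b with hβ_def
  have hβ : 0 < β := div_pos ha hb
  have hβb : β * b = a := div_mul_cancel₀ a hb.ne'
  obtain ⟨-, hsub⟩ := heig
  set ψ : Lp ℝ 2 μ := chi μ hC - β • chi μ hC.compl with hψ_def
  set one : Lp ℝ 2 μ := chi μ (MeasurableSet.univ : MeasurableSet (Set.univ : Set M)) with hone
  -- zero value
  have hJ0 : J 0 = 0 := by
    have := hhom 0 ψ; simpa using this
  -- J ψ = lam * ⟪ψ, ψ⟫
  have hJψ : J ψ = lam * ⟪ψ, ψ⟫ := by
    have h1 := hsub 0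
    have h2 := hsub ((2 : ℝ) • ψ)
    rw [hJ0] at h1
    rw [hhom 2 ψ] at h2
    have e1 : ⟪lam • ψ, (0 : Lp ℝ 2 μ) - ψ⟫ = -(lam * ⟪ψ, ψ⟫) := by
      rw [zero_sub, inner_neg_right, real_inner_smul_left]
    have e2 : ⟪lam • ψ, (2 : ℝ) • ψ - ψ⟫ = lam * ⟪ψ, ψ⟫ := by
      have : (2 : ℝ) • ψ - ψ = ψ := by module
      rw [this, real_inner_smul_left]
    rw [e1] at h1
    rw [e2] at h2
    have : |(2 : ℝ)| = 2 := by norm_num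
    rw [this] at h2
    linarith
  -- J v ≥ lam * ⟪ψ, v⟫ for all v
  have hkey : ∀ v : Lp ℝ 2 μ, J v ≥ lam * ⟪ψ, v⟫ := by
    intro v
    have h := hsub v
    rw [inner_sub_right, real_inner_smul_left, real_inner_smul_left] at h
    linarith [h, hJψ.ge, hJψ.le]
  -- chi compl as one - chi
  have hCc : chi μ hC.compl = one - chi μ hC := by
    rw [hone, ← chi_add_chi_compl μ hC]; abel
  have hDc' : chi μ hD.compl = one - chi μ hD := by
    rw [hone, ← chi_add_chi_compl μ hD]; abel
  -- J ψ = (1+β) J (chi C)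
  have hJψ2 : J ψ = (1 + β) * J (chi μ hC) := by
    have : ψ = (1 + β) • chi μ hC + (-β) • one := by
      rw [hψ_def, hCc]; module
    rw [this, htrans, hhom, abs_of_pos (by linarith)]
  -- inner products
  have hψψ : ⟪ψ, ψ⟫ = a + β * β * b := by
    rw [hψ_def, inner_sub_left, inner_sub_right, inner_sub_right,
      real_inner_smul_left, real_inner_smul_right, real_inner_smul_right,
      real_inner_smul_left, inner_chi_chi, inner_chi_chi, inner_chi_chi, inner_chi_chi,
      Set.inter_self, Set.inter_compl_self, Set.compl_inter_self, Set.inter_self]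
    rw [ha_def, hb_def]
    simp only [measure_empty, ENNReal.toReal_zero, mul_zero]
    ring
  -- lam * a = J (chi C)
  have hlam : lam * a = J (chi μ hC) := by
    have h := hJψ
    rw [hJψ2, hψψ] at h
    have : β * β * b = β * a := by rw [mul_assoc, hβb]
    rw [this] at h
    have h1β : (1 : ℝ) + β ≠ 0 := by positivity
    have h' : (1 + β) * J (chi μ hC) = (1 + β) * (lam * a) := by rw [h]; ring
    exact (mul_left_cancel₀ h1β h').symm
  -- test with v = chi D - chi Dᶜ
  set v : Lp ℝ 2 μ := chi μ hD - (1 : ℝ) • chi μ hD.compl with hv_def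
  have hJv : J v = 2 * J (chi μ hD) := by
    have : v = (2 : ℝ) • chi μ hD + (-1 : ℝ) • one := by
      rw [hv_def, hDc']; module
    rw [this, htrans, hhom]
    norm_num
  have hf_meas : μ (Cᶜ ∩ D) ≠ ⊤ := measure_ne_top μ _
  set f : ℝ := (μ (Cᶜ ∩ D)).toReal with hf_def
  have hbfd : b = f + d := by
    have h3 : Cᶜ ∩ Dᶜ = Dᶜ := Set.inter_eq_right.mpr (Set.compl_subset_compl.mpr hCD)
    have hsplit : Cᶜ = (Cᶜ ∩ D) ∪ Dᶜ := by
      rw [← h3]; exact (Set.inter_union_compl Cᶜ D).symm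
    have hdisj : Disjoint (Cᶜ ∩ D) Dᶜ := by
      exact Set.disjoint_right.mpr fun x hx hx2 => hx (Set.inter_subset_right hx2)
    rw [hb_def, hsplit, measure_union hdisj hD.compl,
      ENNReal.toReal_add hf_meas (measure_ne_top μ Dᶜ)]
  have hψv : ⟪ψ, v⟫ = a - β * f + β * d := by
    rw [hψ_def, hv_def, inner_sub_left, inner_sub_right, inner_sub_right,
      real_inner_smul_left, real_inner_smul_right, real_inner_smul_right,
      real_inner_smul_left, inner_chi_chi, inner_chi_chi, inner_chi_chi, inner_chi_chi]
    have h1 : C ∩ D = C := Set.inter_eq_left.mpr hCD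
    have h2 : C ∩ Dᶜ = ∅ := by
      ext x
      simp only [Set.mem_inter_iff, Set.mem_compl_iff, Set.mem_empty_iff_false, iff_false,
        not_and, not_not]
      exact fun hx => hCD hx
    have h3 : Cᶜ ∩ Dᶜ = Dᶜ := Set.inter_eq_right.mpr (Set.compl_subset_compl.mpr hCD)
    rw [h1, h2, h3]
    simp only [measure_empty, ENNReal.toReal_zero, mul_zero, one_mul]
    ring
  have hmain := hkey v
  rw [hJv, hψv] at hmain
  -- a - β f + β d = 2 β d
  have harith : a - β * f + β * d = 2 * (β * d) := by
    have : β * b = β * f + β * d := by rw [hbfd]; ring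
    nlinarith [hβb, this]
  rw [harith] at hmain
  -- so J (chi D) ≥ lam * β * d
  have hJD : J (chi μ hD) ≥ lam * β * d := by nlinarith
  -- lam * β * d = J (chi C) * d / b
  have hfinal : lam * β * d = J (chi μ hC) * d / b := by
    rw [← hlam, hβ_def]
    field_simp
  rw [hfinal] at hJD
  rw [div_mul_eq_mul_div, le_div_iff₀ hd]
  have h := (div_le_iff₀ hb).mp hJD
  linarith
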